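/- Let Σ be a finite-dimensional real vector space with non-degenerate bilinear form B of symmetry type σ, and let E ∈ End(Σ) satisfy E^t = σE. Suppose E ∘ E = tr(E) E and there exists A ∈ End(Σ) with E ∘ A ∘ E = tr(E ∘ A) E and tr(E ∘ A) ≠ 0. Then rk(E) = 1. -/

import Mathlib

/-- if `E^t = σE`, `E ∘ E = tr(E) E` and there is `A` with
`E ∘ A ∘ E = tr(E ∘ A) E` and `tr(E ∘ A) ≠ 0`, then `E` has rank one. -/
theorem stmt_5 (S : Type*) [AddCommGroup S] [Module ℝ S] [FiniteDimensional ℝ S]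
    (B : S →ₗ[ℝ] S →ₗ[ℝ] ℝ)
    (hBnd : ∀ x : S, (∀ y : S, B x y = 0) → x = 0)
    (σ : ℝ) (hσ : σ = 1 ∨ σ = -1)
    (hsym : ∀ x y : S, B x y = σ * B y x)
    (E : S →ₗ[ℝ] S)
    (hadj : ∀ x y : S, B x (E y) = σ * B (E x) y)
    (hsq : E ∘ₗ E = (LinearMap.trace ℝ S E) • E)
    (A : S →ₗ[ℝ] S)
    (hA : E ∘ₗ A ∘ₗ E = (LinearMap.trace ℝ S (E ∘ₗ A)) • E)
    (htr : LinearMap.trace ℝ S (E ∘ₗ A) ≠ 0) :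
    Module.finrank ℝ (LinearMap.range E) = 1 := by
  set c : ℝ := LinearMap.trace ℝ S (E ∘ₗ A) with hc
  set P : S →ₗ[ℝ] S := c⁻¹ • (E ∘ₗ A) with hP
  -- P is idempotent
  have hidem : P ∘ₗ P = P := by
    ext x
    have h1 : E (A (E (A x))) = c • E (A x) := by
      have := congrArg (fun f => f (A x)) hA
      simpa using this
    simp only [hP, LinearMap.comp_apply, LinearMap.smul_apply, map_smul]
    rw [h1]
    simp [smul_smul, inv_mul_cancel₀ htr]
  obtain ⟨p, hp⟩ := (LinearMap.isProj_iff_isIdempotentElem P).2 hidem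
  -- p = range P
  have hpr : p = LinearMap.range P := by
    apply le_antisymm
    · intro x hx
      exact ⟨x, hp.map_id x hx⟩
    · rintro _ ⟨x, rfl⟩
      exact hp.map_mem x
  -- trace P = 1
  have htrP : LinearMap.trace ℝ S P = 1 := by
    simp [hP, map_smul, ← hc, inv_mul_cancel₀ htr]
  have hfr : Module.finrank ℝ p = 1 := by
    have := hp.trace
    rw [htrP] at this
    exact_mod_cast this.symm
  -- range E = range P
  have hrange : LinearMap.range E = LinearMap.range P := by
    apply le_antisymm
    · rintro _ ⟨x, rfl⟩
      refine ⟨E x, ?_⟩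
      have h1 : E (A (E x)) = c • E x := by
        have := congrArg (fun f => f x) hA
        simpa using this
      simp [hP, h1, smul_smul, inv_mul_cancel₀ htr]
    · rintro _ ⟨x, rfl⟩
      exact ⟨c⁻¹ • A x, by simp [hP]⟩
  rw [hrange, ← hpr]
  exact hfr
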